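/- Consider a fork graph with central vertex 3 adjacent to vertices 1, 2, 4, where vertex 4 may start a further chain. Let a_j ∈ {1/3, 2/3} be coefficients and d_j ≤ -2 integer weights satisfying, for each vertex i, Σ_{j adjacent to i} a_j + a_i d_i = 2 + d_i. If d_3 ≤ -3, then necessarily a_1 = a_2 = a_4 = 1/3, a_3 = 2/3, d_3 = -3, and each of the vertices 1, 2, 4 is an endpoint of the graph (has no further neighbors) with d_1 = d_2 = d_4 = -2; in particular the graph has exactly 4 vertices. -/

import Mathlib

open Finset

/-- Fork case with central vertex `v3` of weight `d v3 ≤ -3` in the (connected) dual graph of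
the exceptional divisor: necessarily `a v1 = a v2 = a v4 = 1/3`, `a v3 = 2/3`, `d v3 = -3`,
the vertices `v1, v2, v4` are endpoints with weight `-2`, and the graph has exactly 4 vertices. -/
theorem stmt4 {V : Type*} [Fintype V] [DecidableEq V]
    (G : SimpleGraph V) [DecidableRel G.Adj] (hconn : G.Connected)
    (a : V → ℚ) (d : V → ℤ)
    (v1 v2 v3 v4 : V)
    (hdist : v1 ≠ v2 ∧ v1 ≠ v3 ∧ v1 ≠ v4 ∧ v2 ≠ v3 ∧ v2 ≠ v4 ∧ v3 ≠ v4)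
    (hnbr : G.neighborFinset v3 = {v1, v2, v4})
    (hmem : ∀ i, a i = 1/3 ∨ a i = 2/3)
    (hd : ∀ i, d i ≤ -2)
    (heq : ∀ i, (∑ j ∈ G.neighborFinset i, a j) + a i * (d i : ℚ) = 2 + (d i : ℚ))
    (hd3 : d v3 ≤ -3) :
    a v1 = 1/3 ∧ a v2 = 1/3 ∧ a v4 = 1/3 ∧ a v3 = 2/3 ∧ d v3 = -3 ∧
    G.neighborFinset v1 = {v3} ∧ G.neighborFinset v2 = {v3} ∧ G.neighborFinset v4 = {v3} ∧
    d v1 = -2 ∧ d v2 = -2 ∧ d v4 = -2 ∧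
    Fintype.card V = 4 := by
  obtain ⟨h12, h13, h14, h23, h24, h34⟩ := hdist
  -- equation at v3
  have h3 := heq v3
  rw [hnbr] at h3
  rw [Finset.sum_insert (by simp [h12, h14]), Finset.sum_insert (by simp [h24]),
    Finset.sum_singleton] at h3
  have hd3Q : (d v3 : ℚ) ≤ -3 := by exact_mod_cast hd3
  have hlb : ∀ i, 1/3 ≤ a i := fun i => by rcases hmem i with h | h <;> rw [h] <;> norm_num
  have hub : ∀ i, a i ≤ 2/3 := fun i => by rcases hmem i with h | h <;> rw [h] <;> norm_num
  have ha3 : a v3 = 2/3 := by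
    rcases hmem v3 with h | h
    · exfalso; rw [h] at h3; linarith [hlb v1, hlb v2, hlb v4, hub v1, hub v2, hub v4]
    · exact h
  rw [ha3] at h3
  have ha1 : a v1 = 1/3 := by
    rcases hmem v1 with h | h
    · exact h
    · exfalso; rw [h] at h3; linarith [hlb v2, hlb v4]
  have ha2 : a v2 = 1/3 := by
    rcases hmem v2 with h | h
    · exact h
    · exfalso; rw [h] at h3; linarith [hlb v1, hlb v4]
  have ha4 : a v4 = 1/3 := by
    rcases hmem v4 with h | h
    · exact h
    · exfalso; rw [h] at h3; linarith [hlb v1, hlb v2]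
  have hd3Q' : (d v3 : ℚ) = -3 := by rw [ha1, ha2, ha4] at h3; linarith
  have hd3' : d v3 = -3 := by exact_mod_cast hd3Q'
  -- branch lemma
  have branch : ∀ v, v ∈ G.neighborFinset v3 → a v = 1/3 →
      G.neighborFinset v = {v3} ∧ d v = -2 := by
    intro v hv hav
    have hv3 : v3 ∈ G.neighborFinset v := by
      rw [SimpleGraph.mem_neighborFinset] at hv ⊢
      exact hv.symm
    have hsplit : G.neighborFinset v = insert v3 (G.neighborFinset v \ {v3}) := by
      ext x
      by_cases hx : x = v3 <;> simp [hx, hv3]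
    have hv' := heq v
    rw [hsplit, Finset.sum_insert (by simp)] at hv'
    set s := G.neighborFinset v \ {v3} with hs
    have hdvQ : (d v : ℚ) ≤ -2 := by exact_mod_cast hd v
    have hsum_le : ∑ j ∈ s, a j ≤ 0 := by
      rw [ha3, hav] at hv'
      linarith
    have hpos : ∀ j ∈ s, (0:ℚ) < a j := by
      intro j _
      rcases hmem j with h | h <;> rw [h] <;> norm_num
    have hsempty : s = ∅ := by
      by_contra hne
      have := Finset.sum_pos hpos (Finset.nonempty_iff_ne_empty.mpr hne)
      linarith
    have hnv : G.neighborFinset v = {v3} := by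
      rw [hsplit, hsempty]; rfl
    refine ⟨hnv, ?_⟩
    rw [hsempty, Finset.sum_empty, ha3, hav] at hv'
    have : (d v : ℚ) = -2 := by linarith
    exact_mod_cast this
  have hv1mem : v1 ∈ G.neighborFinset v3 := by rw [hnbr]; simp
  have hv2mem : v2 ∈ G.neighborFinset v3 := by rw [hnbr]; simp
  have hv4mem : v4 ∈ G.neighborFinset v3 := by rw [hnbr]; simp
  obtain ⟨hn1, hd1⟩ := branch v1 hv1mem ha1
  obtain ⟨hn2, hd2⟩ := branch v2 hv2mem ha2
  obtain ⟨hn4, hd4⟩ := branch v4 hv4mem ha4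
  -- cardinality
  have step : ∀ u, u ∈ ({v1, v2, v3, v4} : Finset V) → ∀ x, G.Adj u x →
      x ∈ ({v1, v2, v3, v4} : Finset V) := by
    intro u hu x hx
    simp only [Finset.mem_insert, Finset.mem_singleton] at hu
    rcases hu with h | h | h | h
    · rw [h] at hx
      have : x ∈ G.neighborFinset v1 := (SimpleGraph.mem_neighborFinset _ _ _).mpr hx
      rw [hn1, Finset.mem_singleton] at this; subst this; simp
    · rw [h] at hx
      have : x ∈ G.neighborFinset v2 := (SimpleGraph.mem_neighborFinset _ _ _).mpr hx
      rw [hn2, Finset.mem_singleton] at this; subst this; simp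
    · rw [h] at hx
      have : x ∈ G.neighborFinset v3 := (SimpleGraph.mem_neighborFinset _ _ _).mpr hx
      rw [hnbr] at this
      simp only [Finset.mem_insert, Finset.mem_singleton] at this
      rcases this with rfl | rfl | rfl <;> simp
    · rw [h] at hx
      have : x ∈ G.neighborFinset v4 := (SimpleGraph.mem_neighborFinset _ _ _).mpr hx
      rw [hn4, Finset.mem_singleton] at this; subst this; simp
  have hwalk : ∀ (u v : V), G.Walk u v → u ∈ ({v1, v2, v3, v4} : Finset V) →
      v ∈ ({v1, v2, v3, v4} : Finset V) := by
    intro u v w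
    induction w with
    | nil => exact id
    | cons h p ih => exact fun hu => ih (step _ hu _ h)
  have hS : ∀ v : V, v ∈ ({v1, v2, v3, v4} : Finset V) := by
    intro v
    obtain ⟨w⟩ := (hconn v3 v)
    exact hwalk _ _ w (by simp)
  have huniv : (Finset.univ : Finset V) = {v1, v2, v3, v4} :=
    (Finset.eq_univ_iff_forall.mpr hS).symm
  have hcard : Fintype.card V = 4 := by
    rw [← Finset.card_univ, huniv,
      Finset.card_insert_of_notMem (by simp [h12, h13, h14]),
      Finset.card_insert_of_notMem (by simp [h23, h24]),
      Finset.card_insert_of_notMem (by simp [h34]), Finset.card_singleton]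
  exact ⟨ha1, ha2, ha4, ha3, hd3', hn1, hn2, hn4, hd1, hd2, hd4, hcard⟩
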